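/- Each ideal conv_α (α ≥ 2 a countable ordinal) is a Σ⁰₄ (i.e., F_{σδσ}) subset of the Cantor space P(ω^α+1) ≅ 2^ω (after identifying the countable set ω^α+1 with ω). -/

import Mathlib

open Set Filter Topology Ordinal

noncomputable section

/-- The derived set of `A`: the set of accumulation (limit) points of `A`. -/
def derivSet {X : Type*} [TopologicalSpace X] (A : Set X) : Set X :=
  {p | p ∈ closure (A \ {p})}

/-- The ordinal space `ω^a + 1 = [0, ω^a]` with the (order) topology. -/
abbrev OrdSpace (a : Ordinal) : Type _ := ↥(Set.Iic (omega0 ^ a))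

/-- The ideal `conv_a` on `ω^a + 1`: sets with finite derived set. -/
def convIdeal (a : Ordinal) : Set (Set (OrdSpace a)) :=
  {A | (derivSet A).Finite}

/-- `I` is an ideal of subsets. -/
structure IsIdeal {S : Type*} (I : Set (Set S)) : Prop where
  empty_mem : ∅ ∈ I
  subset_mem : ∀ {A B : Set S}, A ⊆ B → B ∈ I → A ∈ I
  union_mem : ∀ {A B : Set S}, A ∈ I → B ∈ I → A ∪ B ∈ I

/-- The subsequence of `f` indexed by `A` converges to `x`. -/
def ConvAlong {X : Type*} [TopologicalSpace X] (f : ℕ → X) (A : Set ℕ) (x : X) : Prop :=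
  ∀ U ∈ nhds x, {n ∈ A | f n ∉ U}.Finite

/-- Katětov order: `J ≤_K I`, where `I` lives on `X` and `J` on `Y`. -/
def KatetovLE {X Y : Type*} (J : Set (Set Y)) (I : Set (Set X)) : Prop :=
  ∃ f : X → Y, ∀ A ∈ J, f ⁻¹' A ∈ I

/-- `X ∈ FinBW(I)`: every sequence in `X` has a convergent subsequence indexed
by an `I`-positive set. -/
def InFinBW (I : Set (Set ℕ)) (X : Type*) [TopologicalSpace X] : Prop :=
  ∀ f : ℕ → X, ∃ A : Set ℕ, A ∉ I ∧ ∃ x : X, ConvAlong f A x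

/-- `ω ^ a` has countable cardinality when `a` does. -/
lemma card_opow_omega0_le {a : Ordinal} (hac : a.card ≤ Cardinal.aleph0) :
    (omega0 ^ a).card ≤ Cardinal.aleph0 := by
  induction a using Ordinal.induction with
  | h a IH =>
    rcases Ordinal.zero_or_succ_or_isSuccLimit a with rfl | ⟨b, rfl⟩ | hlim
    · simpa using le_of_lt Cardinal.one_lt_aleph0
    · rw [opow_succ, Ordinal.card_mul]
      have hb : b.card ≤ Cardinal.aleph0 := by
        refine le_trans ?_ hac
        exact Ordinal.card_le_card (le_of_lt (Order.lt_succ b))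
      calc (omega0 ^ b).card * omega0.card ≤ Cardinal.aleph0 * Cardinal.aleph0 := by
            exact mul_le_mul' (IH b (Order.lt_succ b) hb) (le_of_eq Ordinal.card_omega0)
        _ = Cardinal.aleph0 := Cardinal.aleph0_mul_aleph0
    · -- limit case
      have hcover : Iio (omega0 ^ a) ⊆ ⋃ b ∈ Iio a, Iio (omega0 ^ b) := by
        intro x hx
        obtain ⟨c, hc, hx'⟩ := (Ordinal.lt_opow_of_isSuccLimit Ordinal.omega0_ne_zero hlim).1 hx
        exact mem_biUnion hc hx'
      have hIa : (Iio a).Countable := by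
        rw [← Set.countable_coe_iff, ← Cardinal.mk_le_aleph0_iff, Ordinal.mk_Iio_ordinal]
        simpa [← Ordinal.lift_card, Cardinal.lift_le_aleph0] using hac
      have hcnt : (Iio (omega0 ^ a)).Countable := by
        refine Set.Countable.mono hcover (Set.Countable.biUnion hIa fun b hb => ?_)
        rw [← Set.countable_coe_iff, ← Cardinal.mk_le_aleph0_iff, Ordinal.mk_Iio_ordinal]
        simpa [← Ordinal.lift_card, Cardinal.lift_le_aleph0] using
          IH b hb (le_trans (Ordinal.card_le_card hb.le) hac)
      rw [← Set.countable_coe_iff, ← Cardinal.mk_le_aleph0_iff, Ordinal.mk_Iio_ordinal] at hcnt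
      simpa [← Ordinal.lift_card, Cardinal.lift_le_aleph0] using hcnt

/-- The space `[0, ω^a]` is countable when `a` is. -/
lemma countable_Iic_opow {a : Ordinal} (hac : a.card ≤ Cardinal.aleph0) :
    (Iic (omega0 ^ a)).Countable := by
  rw [show Iic (omega0 ^ a) = Iio (omega0 ^ a + 1) by
    rw [Ordinal.add_one_eq_succ, Order.Iio_succ]]
  rw [← Set.countable_coe_iff, ← Cardinal.mk_le_aleph0_iff, Ordinal.mk_Iio_ordinal]
  rw [Ordinal.add_one_eq_succ, Ordinal.card_succ]
  simpa [← Ordinal.lift_card, Cardinal.lift_le_aleph0] using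
    Cardinal.add_le_aleph0.2 ⟨card_opow_omega0_le hac, Cardinal.one_le_aleph0⟩

/-- Characterization of the derived set in the ordinal space `[0, ω^a]`:
a point is an accumulation point iff it is positive and is approached from below. -/
lemma mem_derivSet_iff {a : Ordinal} (A : Set (OrdSpace a)) (x : OrdSpace a) :
    x ∈ derivSet A ↔ 0 < x.val ∧ ∀ b < x, ∃ y ∈ A, b < y ∧ y < x := by
  constructor
  · intro h
    rw [derivSet, Set.mem_setOf_eq, mem_closure_iff] at h
    have hx0 : 0 < x.val := by
      by_contra h0
      have hx : x.val = 0 := le_antisymm (not_lt.1 h0) (zero_le (a := _))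
      obtain ⟨y, hyU, hyA, hyx⟩ := h (Subtype.val ⁻¹' Iio (x.val + 1))
        ((isOpen_Iio).preimage continuous_subtype_val)
        (by simp [hx, Ordinal.lt_one_iff_zero])
      have : y.val < 1 := by simpa [hx] using hyU
      exact hyx (Subtype.ext (by rw [Ordinal.lt_one_iff_zero] at this; rw [this, hx]))
    refine ⟨hx0, fun b hb => ?_⟩
    obtain ⟨y, hyU, hyA, hyx⟩ := h (Subtype.val ⁻¹' Ioo b.val (x.val + 1))
      ((isOpen_Ioo).preimage continuous_subtype_val)
      ⟨hb, by rw [Ordinal.add_one_eq_succ]; exact Order.lt_succ _⟩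
    have hylt : y < x := by
      have : y.val ≤ x.val := by
        have := hyU.2; rw [Ordinal.add_one_eq_succ, Order.lt_succ_iff] at this; exact this
      exact lt_of_le_of_ne this (fun hc => hyx hc)
    exact ⟨y, hyA, hyU.1, hylt⟩
  · rintro ⟨hx0, h⟩
    rw [derivSet, Set.mem_setOf_eq, mem_closure_iff]
    intro U hU hxU
    obtain ⟨l, hl, hsub⟩ := exists_Ioc_subset_of_mem_nhds (hU.mem_nhds hxU)
      ⟨⟨0, Set.mem_Iic.2 zero_le⟩, by exact_mod_cast hx0⟩
    obtain ⟨y, hyA, hly, hyx⟩ := h l hl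
    exact ⟨y, hsub ⟨hly, hyx.le⟩, hyA, fun hc => absurd (hc ▸ hyx) (lt_irrefl x)⟩

/-- `conv_a` is `Σ⁰₄` (i.e. `F_{σδσ}`) as a subset of the Cantor space `2^(ω^a+1)`:
it is a countable union of countable intersections of countable unions of closed sets. -/
theorem stmt7 (a : Ordinal) (ha : 2 ≤ a) (hac : a.card ≤ Cardinal.aleph0) :
    ∃ C : ℕ → ℕ → ℕ → Set (OrdSpace a → Bool),
      (∀ i j k, IsClosed (C i j k)) ∧
      {χ : OrdSpace a → Bool | {x : OrdSpace a | χ x = true} ∈ convIdeal a}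
        = ⋃ i, ⋂ j, ⋃ k, C i j k := by
  classical
  have hcnt : Countable (OrdSpace a) := (countable_Iic_opow hac).to_subtype
  have hne : Nonempty (OrdSpace a) := ⟨⟨0, Set.mem_Iic.2 zero_le⟩⟩
  obtain ⟨g, hg⟩ := exists_surjective_nat (OrdSpace a)
  obtain ⟨e, he⟩ := exists_surjective_nat (Finset (OrdSpace a))
  refine ⟨fun i j k =>
    {χ : OrdSpace a → Bool | ((g j).val = 0 ∨ g j ∈ e i) ∨
      (g k < g j ∧ ∀ y : OrdSpace a, g k < y → y < g j → χ y = false)}, ?_, ?_⟩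
  · intro i j k
    beta_reduce
    by_cases hP : (g j).val = 0 ∨ g j ∈ e i
    · have : {χ : OrdSpace a → Bool | ((g j).val = 0 ∨ g j ∈ e i) ∨
          (g k < g j ∧ ∀ y : OrdSpace a, g k < y → y < g j → χ y = false)} = Set.univ := by
        ext χ; simp [hP]
      rw [this]; exact isClosed_univ
    · by_cases hQ : g k < g j
      · have : {χ : OrdSpace a → Bool | ((g j).val = 0 ∨ g j ∈ e i) ∨
            (g k < g j ∧ ∀ y : OrdSpace a, g k < y → y < g j → χ y = false)}
            = ⋂ y ∈ {y : OrdSpace a | g k < y ∧ y < g j},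
                (fun χ : OrdSpace a → Bool => χ y) ⁻¹' {false} := by
          ext χ
          simp only [Set.mem_setOf_eq, hP, false_or, hQ, true_and, Set.mem_iInter,
            Set.mem_preimage, Set.mem_singleton_iff]
          constructor
          · intro h y hy; exact h y hy.1 hy.2
          · intro h y h1 h2; exact h y ⟨h1, h2⟩
        rw [this]
        exact isClosed_biInter fun y _ =>
          (isClosed_discrete _).preimage (continuous_apply y)
      · have : {χ : OrdSpace a → Bool | ((g j).val = 0 ∨ g j ∈ e i) ∨
            (g k < g j ∧ ∀ y : OrdSpace a, g k < y → y < g j → χ y = false)} = ∅ := by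
          ext χ; simp [hP, hQ]
        rw [this]; exact isClosed_empty
  · ext χ
    set A : Set (OrdSpace a) := {x | χ x = true} with hA
    simp only [Set.mem_setOf_eq, convIdeal, Set.mem_iUnion, Set.mem_iInter]
    constructor
    · intro hfin
      obtain ⟨i, hi⟩ := he hfin.toFinset
      refine ⟨i, fun j => ?_⟩
      by_cases hx : (g j).val = 0 ∨ g j ∈ e i
      · exact ⟨0, Or.inl hx⟩
      · push_neg at hx
        have hxd : g j ∉ derivSet A := by
          intro hd
          exact hx.2 (by rw [hi]; exact hfin.mem_toFinset.2 hd)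
        rw [mem_derivSet_iff] at hxd
        push_neg at hxd
        have hx0 : 0 < (g j).val := pos_iff_ne_zero.2 hx.1
        obtain ⟨b, hb, hball⟩ := hxd hx0
        obtain ⟨k, hk⟩ := hg b
        refine ⟨k, Or.inr ⟨hk ▸ hb, fun y h1 h2 => ?_⟩⟩
        rw [hk] at h1
        rw [Bool.eq_false_iff]
        intro hyA
        exact absurd h2 (not_lt.2 (hball y hyA h1))
    · rintro ⟨i, h⟩
      refine Set.Finite.subset (((e i).finite_toSet).insert ⟨0, Set.mem_Iic.2 zero_le⟩)
        fun x hx => ?_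
      obtain ⟨j, hj⟩ := hg x
      obtain ⟨k, hk⟩ := h j
      rcases hk with hk | ⟨hlt, hall⟩
      · rcases hk with hk | hk
        · left; exact Subtype.ext (by rw [← hj, hk])
        · right; rw [← hj]; exact hk
      · exfalso
        rw [mem_derivSet_iff] at hx
        obtain ⟨y, hyA, h1, h2⟩ := hx.2 (g k) (hj ▸ hlt)
        have := hall y h1 (by rw [hj]; exact h2)
        have hyA' : χ y = true := hyA
        simp [hyA'] at this
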